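/- Let c > 0 and define k : G → ℝ by the everywhere-convergent series k(x,ζ) = −c x ∑_{i=0}^∞ (c (x² − ζ²))^i / (2^{2i+1} · i! · (i+1)!). Then k is twice continuously differentiable on G and satisfies: k_{xx}(x,ζ) − k_{ζζ}(x,ζ) = c · k(x,ζ) for all (x,ζ) in the interior of G, k_ζ(x,0) = 0 for all x ∈ [0,1], and k(x,x) = −(c/2) x for all x ∈ [0,1]. (This is the kernel equation with a ≡ 0; the series equals −c x · I₁(√(c(x²−ζ²)))/√(c(x²−ζ²)) with I₁ the first-order modified Bessel function I₁(ϖ) = ∑_{i=0}^∞ ϖ^{2i+1}/(2^{2i+1} i! (i+1)!).) -/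

import Mathlib

open Set

/-- The closed triangle `G = {(x,ζ) : 0 ≤ ζ ≤ x ≤ 1}`. -/
def G : Set (ℝ × ℝ) := {p | 0 ≤ p.2 ∧ p.2 ≤ p.1 ∧ p.1 ≤ 1}

/-- The explicit Bessel-series kernel
`k(x,ζ) = -c x ∑_{i=0}^∞ (c(x²-ζ²))^i / (2^{2i+1} i! (i+1)!)`,
i.e. `k(x,ζ) = -c x · I₁(√(c(x²-ζ²)))/√(c(x²-ζ²))`. -/
noncomputable def besselKernel (c : ℝ) (x ζ : ℝ) : ℝ :=
  -(c * x) * ∑' i : ℕ,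
    (c * (x ^ 2 - ζ ^ 2)) ^ i /
      ((2:ℝ) ^ (2 * i + 1) * (Nat.factorial i) * (Nat.factorial (i + 1)))

open Set Filter FormalMultilinearSeries


/-- Radius is top for scalar series with coefficients bounded by `1/n!`. -/
lemma myRadiusTop (b : ℕ → ℝ) (hb : ∀ n, ‖b n‖ ≤ 1 / n.factorial) :
    (ofScalars ℝ b).radius = ⊤ := by
  apply FormalMultilinearSeries.radius_eq_top_of_summable_norm
  intro r
  apply Summable.of_nonneg_of_le (fun n => by positivity)
    (fun n => ?_) ((Real.summable_pow_div_factorial r).mul_left 1)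
  rw [ofScalars_norm]
  have h1 : (0:ℝ) ≤ (r:ℝ) ^ n := by positivity
  calc ‖b n‖ * (r:ℝ) ^ n ≤ (1 / n.factorial) * (r:ℝ)^n := by
        exact mul_le_mul_of_nonneg_right (hb n) h1
    _ = 1 * ((r:ℝ)^n / n.factorial) := by ring

/-- Term-by-term derivative of an everywhere-convergent scalar power series. -/
lemma myHasDerivAt (b : ℕ → ℝ) (hb : (ofScalars ℝ b).radius = ⊤) (u : ℝ) :
    HasDerivAt (fun v => ∑' n, b n * v ^ n) (∑' n : ℕ, ((n:ℝ)+1) * b (n+1) * u ^ n) u ∧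
      HasSum (fun n : ℕ => ((n:ℝ)+1) * b (n+1) * u ^ n)
        (∑' n : ℕ, ((n:ℝ)+1) * b (n+1) * u ^ n) := by
  set p := ofScalars ℝ b with hp
  have hfe : (fun v => ∑' n, b n * v ^ n) = p.sum := by
    funext v
    exact (tsum_congr fun n => by rw [ofScalars_apply_eq, smul_eq_mul]).symm
  have hball : HasFPowerSeriesOnBall p.sum p 0 ⊤ := by
    have := p.hasFPowerSeriesOnBall (by rw [hb]; exact ENNReal.zero_lt_top)
    rwa [hb] at this
  have hfd := hball.fderiv
  have hmem : u ∈ Metric.eball (0:ℝ) ⊤ := by simp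
  have hsum : HasSum (fun n => p.derivSeries n fun _ => u) (fderiv ℝ p.sum (0 + u)) :=
    hfd.hasSum hmem
  have hsum2 := hsum.mapL (ContinuousLinearMap.apply ℝ ℝ (1:ℝ))
  have hterm : ∀ n : ℕ, (p.derivSeries n fun _ => u) 1 = ((n:ℝ)+1) * b (n+1) * u ^ n := by
    intro n
    have h1 : (fun _ : Fin n => u) = fun _ : Fin n => u • (1:ℝ) := by
      funext i; simp
    rw [h1, ContinuousMultilinearMap.map_smul_univ]
    have h2 : ((∏ _i : Fin n, u) • ((p.derivSeries n) fun _ => (1:ℝ))) 1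
        = (∏ _i : Fin n, u) • (((p.derivSeries n) fun _ => (1:ℝ)) 1) := rfl
    rw [h2, derivSeries_apply_diag, ofScalars_apply_eq]
    simp only [Finset.prod_const, Finset.card_univ, Fintype.card_fin, smul_eq_mul,
      one_pow, mul_one, nsmul_eq_mul]
    push_cast
    ring
  have hsum3 : HasSum (fun n : ℕ => ((n:ℝ)+1) * b (n+1) * u ^ n) (fderiv ℝ p.sum (0+u) 1) := by
    have e : (fun n : ℕ => ((n:ℝ)+1) * b (n+1) * u ^ n)
        = fun n => (p.derivSeries n fun _ => u) 1 := funext fun n => (hterm n).symm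
    rw [e]; exact hsum2
  rw [zero_add, fderiv_apply_one_eq_deriv] at hsum3
  have hderiv : deriv p.sum u = ∑' n : ℕ, ((n:ℝ)+1) * b (n+1) * u ^ n := hsum3.tsum_eq.symm
  have hda : DifferentiableAt ℝ p.sum u :=
    (hball.analyticAt_of_mem hmem).differentiableAt
  refine ⟨?_, ?_⟩
  · rw [hfe, ← hderiv]
    exact hda.hasDerivAt
  · rwa [hsum3.tsum_eq]

noncomputable def besselCoef (n : ℕ) : ℝ :=
  ((2:ℝ) ^ (2 * n + 1) * (Nat.factorial n) * (Nat.factorial (n + 1)))⁻¹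

lemma besselCoef_denom_pos (n : ℕ) :
    (0:ℝ) < (2:ℝ) ^ (2 * n + 1) * (Nat.factorial n) * (Nat.factorial (n + 1)) := by
  have h1 : (0:ℝ) < (Nat.factorial n : ℝ) := by exact_mod_cast n.factorial_pos
  have h2 : (0:ℝ) < (Nat.factorial (n+1) : ℝ) := by exact_mod_cast (n+1).factorial_pos
  positivity

lemma besselCoef_rec (n : ℕ) :
    besselCoef n = 4 * ((n:ℝ)+1) * ((n:ℝ)+2) * besselCoef (n+1) := by
  unfold besselCoef
  have he : 2 * (n+1) + 1 = (2*n+1) + 2 := by omega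
  rw [he, pow_add, Nat.factorial_succ (n+1), Nat.factorial_succ n]
  have h1 : ((2:ℝ)^(2*n+1)) ≠ 0 := by positivity
  have h2 : (Nat.factorial n : ℝ) ≠ 0 := by
    exact_mod_cast n.factorial_ne_zero
  have h3 : (Nat.factorial (n+1) : ℝ) ≠ 0 := by
    exact_mod_cast (n+1).factorial_ne_zero
  have h4 : ((n:ℝ)+1) ≠ 0 := by positivity
  have h5 : ((n:ℝ)+2) ≠ 0 := by positivity
  push_cast
  field_simp
  ring

lemma besselCoef_pos (n : ℕ) : 0 < besselCoef n :=
  inv_pos.mpr (besselCoef_denom_pos n)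

lemma denom_ge (n : ℕ) (r : ℝ) (hr : 0 < r) (h : r ≤ (Nat.factorial n : ℝ)) :
    r ≤ (2:ℝ) ^ (2 * n + 1) * (Nat.factorial n) * (Nat.factorial (n + 1)) := by
  have h1 : (1:ℝ) ≤ (2:ℝ)^(2*n+1) := one_le_pow₀ (by norm_num)
  have h2 : (1:ℝ) ≤ (Nat.factorial (n+1) : ℝ) := by
    exact_mod_cast Nat.one_le_iff_ne_zero.mpr (n+1).factorial_ne_zero
  have h3 : (0:ℝ) < (Nat.factorial n : ℝ) := by exact_mod_cast n.factorial_pos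
  calc r ≤ (Nat.factorial n : ℝ) := h
    _ ≤ (2:ℝ)^(2*n+1) * (Nat.factorial n) := le_mul_of_one_le_left h3.le h1
    _ ≤ (2:ℝ)^(2*n+1) * (Nat.factorial n) * (Nat.factorial (n+1)) :=
        le_mul_of_one_le_right (by positivity) h2

lemma besselCoef_le (n : ℕ) : ‖besselCoef n‖ ≤ 1 / n.factorial := by
  have h3 : (0:ℝ) < (Nat.factorial n : ℝ) := by exact_mod_cast n.factorial_pos
  rw [Real.norm_eq_abs, abs_of_pos (besselCoef_pos n), besselCoef, one_div]
  exact inv_anti₀ h3 (denom_ge n _ h3 le_rfl)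

lemma besselCoef'_le (n : ℕ) : ‖((n:ℝ)+1) * besselCoef (n+1)‖ ≤ 1 / n.factorial := by
  have h3 : (0:ℝ) < (Nat.factorial n : ℝ) := by exact_mod_cast n.factorial_pos
  have h4 : (0:ℝ) < (n:ℝ)+1 := by positivity
  have hfs : (Nat.factorial (n+1) : ℝ) = ((n:ℝ)+1) * n.factorial := by
    rw [Nat.factorial_succ]; push_cast; ring
  have hle : besselCoef (n+1) ≤ (((n:ℝ)+1) * n.factorial)⁻¹ := by
    rw [besselCoef]
    exact inv_anti₀ (by positivity) (denom_ge (n+1) _ (by positivity) (le_of_eq hfs.symm))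
  rw [Real.norm_eq_abs, abs_of_pos (mul_pos h4 (besselCoef_pos _))]
  calc ((n:ℝ)+1) * besselCoef (n+1) ≤ ((n:ℝ)+1) * (((n:ℝ)+1) * n.factorial)⁻¹ := by
        exact mul_le_mul_of_nonneg_left hle h4.le
    _ = 1 / n.factorial := by field_simp

lemma besselCoef''_le (n : ℕ) :
    ‖((n:ℝ)+1) * (((n:ℝ)+1+1) * besselCoef (n+1+1))‖ ≤ 1 / n.factorial := by
  have h3 : (0:ℝ) < (Nat.factorial n : ℝ) := by exact_mod_cast n.factorial_pos
  have h4 : (0:ℝ) < (n:ℝ)+1 := by positivity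
  have h5 : (0:ℝ) < (n:ℝ)+2 := by positivity
  have hfs : (Nat.factorial (n+2) : ℝ) = ((n:ℝ)+2) * (((n:ℝ)+1) * n.factorial) := by
    rw [Nat.factorial_succ, Nat.factorial_succ]; push_cast; ring
  have hle : besselCoef (n+2) ≤ (((n:ℝ)+2) * (((n:ℝ)+1) * n.factorial))⁻¹ := by
    rw [besselCoef]
    exact inv_anti₀ (by positivity) (denom_ge (n+2) _ (by positivity) (le_of_eq hfs.symm))
  rw [Real.norm_eq_abs, abs_of_pos (mul_pos h4 (mul_pos (by positivity) (besselCoef_pos _)))]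
  have : ((n:ℝ)+1) * (((n:ℝ)+1+1) * besselCoef (n+1+1))
      ≤ ((n:ℝ)+1) * (((n:ℝ)+1+1) * (((n:ℝ)+2) * (((n:ℝ)+1) * n.factorial))⁻¹) := by
    have := mul_le_mul_of_nonneg_left hle (by positivity : (0:ℝ) ≤ (n:ℝ)+1+1)
    exact mul_le_mul_of_nonneg_left (by norm_num at this ⊢; convert this using 2 <;> norm_num) h4.le
  calc ((n:ℝ)+1) * (((n:ℝ)+1+1) * besselCoef (n+1+1)) ≤ _ := this
    _ = 1 / n.factorial := by field_simp; ring



set_option maxHeartbeats 1000000 in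
/-- The explicit series kernel converges everywhere, is twice continuously
differentiable on `G`, and solves the kernel equations with `a ≡ 0`:
`k_{xx} - k_{ζζ} = c·k` on the interior of `G`, `k_ζ(x,0) = 0` and
`k(x,x) = -(c/2)x` for `x ∈ [0,1]`. -/
theorem besselKernel_solves_kernel_equation (c : ℝ) (hc : 0 < c) :
    (∀ x ζ : ℝ, Summable fun i : ℕ =>
        (c * (x ^ 2 - ζ ^ 2)) ^ i /
          ((2:ℝ) ^ (2 * i + 1) * (Nat.factorial i) * (Nat.factorial (i + 1)))) ∧
    ContDiffOn ℝ 2 (fun p : ℝ × ℝ => besselKernel c p.1 p.2) G ∧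
    (∀ p ∈ interior G,
        deriv (deriv (fun s => besselKernel c s p.2)) p.1
          - deriv (deriv (fun s => besselKernel c p.1 s)) p.2
            = c * besselKernel c p.1 p.2) ∧
    (∀ x ∈ Icc (0:ℝ) 1, deriv (fun s => besselKernel c x s) 0 = 0) ∧
    (∀ x ∈ Icc (0:ℝ) 1, besselKernel c x x = -(c / 2) * x) := by
  -- the coefficient sequences
  set a : ℕ → ℝ := besselCoef with ha
  set Da : ℕ → ℝ := fun n => ((n:ℝ)+1) * a (n+1) with hDa
  set DDa : ℕ → ℝ := fun n => ((n:ℝ)+1) * Da (n+1) with hDDa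
  have ra : (FormalMultilinearSeries.ofScalars ℝ a).radius = ⊤ :=
    myRadiusTop a besselCoef_le
  have rDa : (FormalMultilinearSeries.ofScalars ℝ Da).radius = ⊤ :=
    myRadiusTop Da besselCoef'_le
  -- the functions
  set f : ℝ → ℝ := fun u => ∑' n, a n * u ^ n with hf
  set f1 : ℝ → ℝ := fun u => ∑' n, Da n * u ^ n with hf1
  set f2 : ℝ → ℝ := fun u => ∑' n, DDa n * u ^ n with hf2
  have hf' : ∀ u, HasDerivAt f (f1 u) u := fun u => (myHasDerivAt a ra u).1
  have hS1 : ∀ u, HasSum (fun n => Da n * u ^ n) (f1 u) := fun u => (myHasDerivAt a ra u).2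
  have hf1' : ∀ u, HasDerivAt f1 (f2 u) u := fun u => (myHasDerivAt Da rDa u).1
  have hS2 : ∀ u, HasSum (fun n => DDa n * u ^ n) (f2 u) := fun u => (myHasDerivAt Da rDa u).2
  -- the ODE for the series: f u = 8 f1 u + 4 u f2 u
  have hode : ∀ u : ℝ, f u = 8 * f1 u + 4 * (u * f2 u) := by
    intro u
    have h2 := (hS2 u).mul_left u
    set F : ℕ → ℝ := fun m : ℕ => (m:ℝ) * Da m * u ^ m with hF
    have h3 : HasSum (fun n : ℕ => F (n+1)) (u * f2 u) := by
      have e : (fun n : ℕ => F (n+1)) = fun n => u * (DDa n * u ^ n) := by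
        funext n
        show ((n+1 : ℕ) : ℝ) * Da (n+1) * u ^ (n+1) = u * (DDa n * u ^ n)
        rw [hDDa]
        push_cast
        ring
      rw [e]; exact h2
    have h4 := (hasSum_nat_add_iff (f := F) 1).mp h3
    rw [hF] at h4
    simp only [Finset.range_one, Finset.sum_singleton, Nat.cast_zero, zero_mul, add_zero,
      pow_zero, mul_one] at h4
    have h5 := ((hS1 u).mul_left 8).add (h4.mul_left 4)
    have h6 : HasSum (fun n : ℕ => a n * u ^ n) (8 * f1 u + 4 * (u * f2 u)) := by
      have e : (fun n : ℕ => a n * u ^ n)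
          = fun n => 8 * (Da n * u ^ n) + 4 * ((n:ℝ) * Da n * u ^ n) := by
        funext n
        show a n * u ^ n = 8 * (Da n * u ^ n) + 4 * ((n:ℝ) * Da n * u ^ n)
        rw [hDa, ha]
        rw [besselCoef_rec n]
        ring
      rw [e]; exact h5
    exact h6.tsum_eq
  -- value at 0
  have hf0 : f 0 = 1/2 := by
    show (∑' n, a n * (0:ℝ) ^ n) = 1/2
    rw [tsum_eq_single 0 (fun n hn => by simp [zero_pow hn])]
    norm_num [ha, besselCoef]
  -- rewriting the kernel
  have kB : ∀ x ζ : ℝ, besselKernel c x ζ = -(c*x) * f (c*(x^2-ζ^2)) := by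
    intro x ζ
    unfold besselKernel
    congr 1
    exact tsum_congr fun i => by rw [div_eq_mul_inv, mul_comm]; rfl
  -- smoothness of f
  have hcd : ContDiff ℝ 2 f := by
    have h := (FormalMultilinearSeries.ofScalars ℝ a).hasFPowerSeriesOnBall
      (by rw [ra]; exact ENNReal.zero_lt_top)
    rw [ra] at h
    have hfe : f = (FormalMultilinearSeries.ofScalars ℝ a).sum := by
      funext v
      exact (tsum_congr fun n => by
        rw [FormalMultilinearSeries.ofScalars_apply_eq, smul_eq_mul]).symm
    rw [hfe]
    rw [contDiff_iff_contDiffAt]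
    exact fun u => (h.analyticAt_of_mem (by simp)).contDiffAt
  -- inner derivative in the x-direction
  have hw : ∀ (ζ x : ℝ), HasDerivAt (fun s : ℝ => c*(s^2-ζ^2)) (2*c*x) x := by
    intro ζ x
    have := ((hasDerivAt_pow 2 x).sub_const (ζ^2)).const_mul c
    exact this.congr_deriv (by norm_num; ring)
  have hw2 : ∀ (x t : ℝ), HasDerivAt (fun s : ℝ => c*(x^2-s^2)) (-(2*c*t)) t := by
    intro x t
    have := ((hasDerivAt_pow 2 t).const_sub (x^2)).const_mul c
    exact this.congr_deriv (by norm_num; ring)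
  have hmc : ∀ x : ℝ, HasDerivAt (fun s : ℝ => -(c*s)) (-c) x := by
    intro x
    exact ((hasDerivAt_id x).const_mul c).neg.congr_deriv (by ring)
  -- first x-derivative
  have hkx : ∀ (ζ x : ℝ), HasDerivAt (fun s => besselKernel c s ζ)
      (-c * f (c*(x^2-ζ^2)) + -(c*x) * (f1 (c*(x^2-ζ^2)) * (2*c*x))) x := by
    intro ζ x
    have h2 : HasDerivAt (fun s => f (c*(s^2-ζ^2))) (f1 (c*(x^2-ζ^2)) * (2*c*x)) x :=
      (hf' _).comp x (hw ζ x)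
    have h3 := (hmc x).mul h2
    simp only [kB]
    exact h3
  have dkx : ∀ ζ : ℝ, deriv (fun s => besselKernel c s ζ)
      = fun x => -c * f (c*(x^2-ζ^2)) + -(c*x) * (f1 (c*(x^2-ζ^2)) * (2*c*x)) :=
    fun ζ => funext fun x => (hkx ζ x).deriv
  -- second x-derivative
  have hkxx : ∀ (ζ x : ℝ), HasDerivAt
      (fun s => -c * f (c*(s^2-ζ^2)) + -(c*s) * (f1 (c*(s^2-ζ^2)) * (2*c*s)))
      (-c * (f1 (c*(x^2-ζ^2)) * (2*c*x))
        + (-c * (f1 (c*(x^2-ζ^2)) * (2*c*x))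
          + -(c*x) * (f2 (c*(x^2-ζ^2)) * (2*c*x) * (2*c*x) + f1 (c*(x^2-ζ^2)) * (2*c)))) x := by
    intro ζ x
    have t1 : HasDerivAt (fun s => -c * f (c*(s^2-ζ^2))) (-c * (f1 (c*(x^2-ζ^2)) * (2*c*x))) x :=
      ((hf' _).comp x (hw ζ x)).const_mul (-c)
    have t3 : HasDerivAt (fun s => f1 (c*(s^2-ζ^2))) (f2 (c*(x^2-ζ^2)) * (2*c*x)) x :=
      (hf1' _).comp x (hw ζ x)
    have t4 : HasDerivAt (fun s : ℝ => 2*c*s) (2*c) x := by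
      simpa using (hasDerivAt_id x).const_mul (2*c)
    have t5 := t3.mul t4
    have t6 := (hmc x).mul t5
    exact t1.add t6
  -- first ζ-derivative
  have hkz : ∀ (x t : ℝ), HasDerivAt (fun s => besselKernel c x s)
      (-(c*x) * (f1 (c*(x^2-t^2)) * (-(2*c*t)))) t := by
    intro x t
    have h2 : HasDerivAt (fun s => f (c*(x^2-s^2))) (f1 (c*(x^2-t^2)) * (-(2*c*t))) t :=
      (hf' _).comp t (hw2 x t)
    have h3 := h2.const_mul (-(c*x))
    simp only [kB]
    exact h3
  have dkz : ∀ x : ℝ, deriv (fun s => besselKernel c x s)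
      = fun t => -(c*x) * (f1 (c*(x^2-t^2)) * (-(2*c*t))) :=
    fun x => funext fun t => (hkz x t).deriv
  -- second ζ-derivative
  have hkzz : ∀ (x t : ℝ), HasDerivAt
      (fun s => -(c*x) * (f1 (c*(x^2-s^2)) * (-(2*c*s))))
      (-(c*x) * (f2 (c*(x^2-t^2)) * (-(2*c*t)) * (-(2*c*t)) + f1 (c*(x^2-t^2)) * (-(2*c)))) t := by
    intro x t
    have t3 : HasDerivAt (fun s => f1 (c*(x^2-s^2))) (f2 (c*(x^2-t^2)) * (-(2*c*t))) t :=
      (hf1' _).comp t (hw2 x t)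
    have t4 : HasDerivAt (fun s : ℝ => -(2*c*s)) (-(2*c)) t := by
      exact ((hasDerivAt_id t).const_mul (2*c)).neg.congr_deriv (by ring)
    exact (t3.mul t4).const_mul (-(c*x))
  refine ⟨?_, ?_, ?_, ?_, ?_⟩
  · -- summability
    intro x ζ
    set u := c*(x^2-ζ^2) with hu
    apply Summable.of_norm
    apply Summable.of_nonneg_of_le (fun n => norm_nonneg _) (fun n => ?_)
      (Real.summable_pow_div_factorial |u|)
    have hD := besselCoef_denom_pos n
    rw [norm_div, norm_pow, Real.norm_eq_abs, Real.norm_eq_abs, abs_of_pos hD]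
    have h3 : (0:ℝ) < (Nat.factorial n : ℝ) := by exact_mod_cast n.factorial_pos
    apply div_le_div_of_nonneg_left ?_ h3 ?_ |>.trans_eq rfl
    · positivity
    · exact denom_ge n _ h3 le_rfl
  · -- smoothness
    have hg : ContDiff ℝ 2 (fun p : ℝ × ℝ => c*(p.1^2-p.2^2)) := by fun_prop
    have hmain : ContDiff ℝ 2 (fun p : ℝ × ℝ => -(c*p.1) * f (c*(p.1^2-p.2^2))) := by
      apply ContDiff.mul
      · fun_prop
      · exact hcd.comp hg
    have : (fun p : ℝ × ℝ => besselKernel c p.1 p.2)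
        = fun p : ℝ × ℝ => -(c*p.1) * f (c*(p.1^2-p.2^2)) := by
      funext p; exact kB p.1 p.2
    rw [this]
    exact hmain.contDiffOn
  · -- the PDE
    rintro ⟨x, ζ⟩ -
    simp only
    rw [dkx ζ, dkz x, (hkxx ζ x).deriv, (hkzz x ζ).deriv, kB x ζ,
      hode (c*(x^2-ζ^2))]
    ring
  · -- k_ζ(x,0) = 0
    intro x _
    rw [(hkz x 0).deriv]
    ring
  · -- k(x,x)
    intro x _
    rw [kB x x]
    have : c*(x^2-x^2) = 0 := by ring
    rw [this, hf0]
    ring
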